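/- If u ≤ 0 solves the structure equation with t ≥ ε > 0 on a closed hyperbolic surface, then ∫_Σ ‖q‖^2 e^{-2u} dA ≤ A/(8ε^2), where A is the area of Σ. -/

import Mathlib

open MeasureTheory

/-- If `u ≤ 0` solves the structure equation with `t ≥ ε > 0` on a
closed hyperbolic surface of area `A`, then `∫ ‖q‖² e^{-2u} ≤ A/(8ε²)`.
Closedness is encoded by `∫ Δu = 0`. -/
theorem stmt6
    (S : Type*) [MeasurableSpace S] (μ : Measure S) [IsFiniteMeasure μ]
    (u Δu q2 : S → ℝ) (t ε : ℝ) (hε : 0 < ε) (htε : ε ≤ t)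
    (hq2 : ∀ x, 0 ≤ q2 x)
    (hu0 : ∀ x, u x ≤ 0)
    (hΔu : Integrable Δu μ)
    (hΔint : ∫ x, Δu x ∂μ = 0)
    (h1 : Integrable (fun x => Real.exp (u x)) μ)
    (h2 : Integrable (fun x => q2 x * Real.exp (-2 * u x)) μ)
    (heq : ∀ x, Δu x + 2 - 2 * Real.exp (u x)
      - 16 * t ^ 2 * q2 x * Real.exp (-2 * u x) = 0) :
    ∫ x, q2 x * Real.exp (-2 * u x) ∂μ ≤ (μ Set.univ).toReal / (8 * ε ^ 2) := by
  set A : ℝ := (μ Set.univ).toReal with hA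
  have hA0 : 0 ≤ A := ENNReal.toReal_nonneg
  set I : ℝ := ∫ x, q2 x * Real.exp (-2 * u x) ∂μ with hI
  set E : ℝ := ∫ x, Real.exp (u x) ∂μ with hE
  have hE0 : 0 ≤ E := integral_nonneg fun x => (Real.exp_pos _).le
  have hI0 : 0 ≤ I := integral_nonneg fun x =>
    mul_nonneg (hq2 x) (Real.exp_pos _).le
  -- Δu x = -2 + 2 e^u + 16 t² q2 e^{-2u}
  have hfun : Δu = fun x => -2 + 2 * Real.exp (u x)
      + 16 * t ^ 2 * (q2 x * Real.exp (-2 * u x)) := by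
    funext x; have := heq x; ring_nf; ring_nf at this; linarith
  have hconst : Integrable (fun _ : S => (-2 : ℝ)) μ := integrable_const _
  have hint : (0 : ℝ) = -2 * A + 2 * E + 16 * t ^ 2 * I := by
    rw [← hΔint, hfun]
    have hc : Integrable (fun x => -2 + 2 * Real.exp (u x)) μ := by
      simpa using hconst.add (h1.const_mul 2)
    rw [integral_add hc (h2.const_mul _),
        integral_add hconst (h1.const_mul 2),
        integral_const, MeasureTheory.integral_const_mul, MeasureTheory.integral_const_mul]
    simp [hA, hE, hI, Measure.real]
    ring
  have ht2 : ε ^ 2 ≤ t ^ 2 := by nlinarith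
  have hε2 : (0 : ℝ) < ε ^ 2 := by positivity
  have key : 16 * ε ^ 2 * I ≤ 2 * A := by nlinarith
  rw [le_div_iff₀ (by positivity)]
  nlinarith
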